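/- For all real numbers a, b and p ∈ (1,2], |a + b|^p ≤ |a|^p + p·sgn(a)·|a|^{p-1}·b + 2^{2-p}·|b|^p. -/
import Mathlib

open Real Set Filter

/-- derivative of `|y|^p` at a positive point -/
private lemma hasDerivAt_abs_rpow_pos {p x : ℝ} (hx : 0 < x) :
    HasDerivAt (fun y : ℝ => |y| ^ p) (p * x ^ (p - 1)) x := by
  have h : HasDerivAt (fun y : ℝ => y ^ p) (p * x ^ (p - 1)) x :=
    Real.hasDerivAt_rpow_const (Or.inl hx.ne')
  refine h.congr_of_eventuallyEq ?_
  filter_upwards [eventually_gt_nhds hx] with y hy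
  rw [abs_of_pos hy]

/-- derivative of `|y|^p` at a negative point -/
private lemma hasDerivAt_abs_rpow_neg {p x : ℝ} (hx : x < 0) :
    HasDerivAt (fun y : ℝ => |y| ^ p) (-(p * (-x) ^ (p - 1))) x := by
  have h0 : HasDerivAt (fun y : ℝ => y ^ p) (p * (-x) ^ (p - 1)) (-x) :=
    Real.hasDerivAt_rpow_const (Or.inl (neg_pos.2 hx).ne')
  have h : HasDerivAt (fun y : ℝ => (-y) ^ p) (p * (-x) ^ (p - 1) * (-1)) x :=
    h0.comp x (hasDerivAt_neg x)
  refine (h.congr_of_eventuallyEq ?_).congr_deriv (by ring)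
  filter_upwards [eventually_lt_nhds hx] with y hy
  rw [abs_of_neg hy]

/-- subadditivity of rpow with exponent in [0,1] -/
private lemma rpow_add_le_add_rpow' {u v q : ℝ} (hu : 0 ≤ u) (hv : 0 ≤ v)
    (hq0 : 0 ≤ q) (hq1 : q ≤ 1) : (u + v) ^ q ≤ u ^ q + v ^ q := by
  lift u to NNReal using hu
  lift v to NNReal using hv
  exact_mod_cast NNReal.rpow_add_le_add_rpow u v hq0 hq1

/-- midpoint concavity consequence: `1 + t^q ≤ 2^(1-q) (1+t)^q` -/
private lemma one_add_rpow_le {t q : ℝ} (ht : 0 ≤ t) (hq0 : 0 ≤ q) (hq1 : q ≤ 1) :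
    1 + t ^ q ≤ 2 ^ (1 - q) * (1 + t) ^ q := by
  have hcc := (Real.concaveOn_rpow hq0 hq1).2 (Set.mem_Ici.2 (zero_le_one))
    (Set.mem_Ici.2 ht) (by norm_num : (0:ℝ) ≤ (1:ℝ)/2) (by norm_num : (0:ℝ) ≤ (1:ℝ)/2)
    (by norm_num)
  simp only [smul_eq_mul, Real.one_rpow] at hcc
  have h2 : ((1:ℝ)/2 * 1 + 1/2 * t) = (1 + t) / 2 := by ring
  rw [h2] at hcc
  have hdiv : ((1 + t) / 2 : ℝ) ^ q = (1 + t) ^ q / 2 ^ q :=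
    Real.div_rpow (by linarith) (by norm_num) q
  have h2q : (2:ℝ) ^ (1 - q) = 2 / 2 ^ q := by
    rw [Real.rpow_sub (by norm_num), Real.rpow_one]
  rw [hdiv] at hcc
  rw [h2q]
  have he : 2 / 2 ^ q * (1 + t) ^ q = 2 * ((1 + t) ^ q / 2 ^ q) := by ring
  rw [he]
  linarith [hcc]

/-- the key one-variable inequality -/
private lemma key_ineq {p : ℝ} (hp1 : 1 < p) (hp2 : p ≤ 2) (x : ℝ) :
    |1 + x| ^ p ≤ 1 + p * x + 2 ^ (2 - p) * |x| ^ p := by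
  have hp0 : 0 < p := by linarith
  set q : ℝ := p - 1 with hq
  have hq0 : 0 < q := by rw [hq]; linarith
  have hq1 : q ≤ 1 := by rw [hq]; linarith
  set C : ℝ := (2:ℝ) ^ (2 - p) with hC
  have hC2 : C = 2 ^ (1 - q) := by rw [hC, hq]; congr 1; ring
  have hC1 : 1 ≤ C := by
    rw [hC]; exact Real.one_le_rpow (by norm_num) (by linarith)
  set F : ℝ → ℝ := fun x => |1 + x| ^ p - (1 + p * x + C * |x| ^ p) with hF
  suffices h : F x ≤ 0 by
    rw [hF] at h; simp only [sub_nonpos] at h; linarith [h]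
  -- continuity of F
  have hcont : Continuous F := by
    apply Continuous.sub
    · exact (continuous_abs.comp (continuous_const.add continuous_id)).rpow_const
        (fun x => Or.inr (by linarith))
    · exact (continuous_const.add (continuous_const.mul continuous_id)).add
        (continuous_const.mul (continuous_abs.rpow_const (fun x => Or.inr (by linarith))))
  -- derivatives in the three open regions
  have hderiv1 : ∀ y : ℝ, 0 < 1 + y → 0 < y →
      HasDerivAt F (p * (1 + y) ^ q - p - C * (p * y ^ q)) y := by
    intro y hy1 hy0
    have h1 : HasDerivAt (fun z : ℝ => |1 + z| ^ p) (p * (1 + y) ^ q * 1) y :=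
      (hasDerivAt_abs_rpow_pos hy1).comp y ((hasDerivAt_id y).const_add 1)
    have h2 : HasDerivAt (fun z : ℝ => 1 + p * z + C * |z| ^ p)
        (0 + p * 1 + C * (p * y ^ q)) y :=
      ((hasDerivAt_const y 1).add ((hasDerivAt_id y).const_mul p)).add
        ((hasDerivAt_abs_rpow_pos hy0).const_mul C)
    exact (h1.sub h2).congr_deriv (by ring)
  have hderiv2 : ∀ y : ℝ, 0 < 1 + y → y < 0 →
      HasDerivAt F (p * (1 + y) ^ q - p + C * (p * (-y) ^ q)) y := by
    intro y hy1 hy0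
    have h1 : HasDerivAt (fun z : ℝ => |1 + z| ^ p) (p * (1 + y) ^ q * 1) y :=
      (hasDerivAt_abs_rpow_pos hy1).comp y ((hasDerivAt_id y).const_add 1)
    have h2 : HasDerivAt (fun z : ℝ => 1 + p * z + C * |z| ^ p)
        (0 + p * 1 + C * (-(p * (-y) ^ q))) y :=
      ((hasDerivAt_const y 1).add ((hasDerivAt_id y).const_mul p)).add
        ((hasDerivAt_abs_rpow_neg hy0).const_mul C)
    exact (h1.sub h2).congr_deriv (by ring)
  have hderiv3 : ∀ y : ℝ, 1 + y < 0 →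
      HasDerivAt F (-(p * (-(1 + y)) ^ q) - p + C * (p * (-y) ^ q)) y := by
    intro y hy1
    have hy0 : y < 0 := by linarith
    have h1 : HasDerivAt (fun z : ℝ => |1 + z| ^ p) (-(p * (-(1 + y)) ^ q) * 1) y :=
      (hasDerivAt_abs_rpow_neg hy1).comp y ((hasDerivAt_id y).const_add 1)
    have h2 : HasDerivAt (fun z : ℝ => 1 + p * z + C * |z| ^ p)
        (0 + p * 1 + C * (-(p * (-y) ^ q))) y :=
      ((hasDerivAt_const y 1).add ((hasDerivAt_id y).const_mul p)).add
        ((hasDerivAt_abs_rpow_neg hy0).const_mul C)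
    exact (h1.sub h2).congr_deriv (by ring)
  have hF0 : F 0 = 0 := by
    simp [hF, Real.zero_rpow hp0.ne', Real.one_rpow,
      abs_of_nonneg (by norm_num : (0:ℝ) ≤ 1)]
  have hFm1 : F (-1) ≤ 0 := by
    show |1 + (-1:ℝ)| ^ p - (1 + p * (-1) + C * |(-1:ℝ)| ^ p) ≤ 0
    norm_num [Real.zero_rpow hp0.ne']
    linarith
  -- Region A : x ≥ 0
  have hA : AntitoneOn F (Ici 0) := by
    apply antitoneOn_of_deriv_nonpos (convex_Ici 0) hcont.continuousOn
    · intro y hy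
      rw [interior_Ici] at hy
      have hy' : 0 < y := hy
      exact (hderiv1 y (by linarith) hy').differentiableAt.differentiableWithinAt
    · intro y hy
      rw [interior_Ici] at hy
      have hy' : 0 < y := hy
      rw [(hderiv1 y (by linarith) hy').deriv]
      have h1 : (1 + y) ^ q ≤ 1 + y ^ q := by
        have := rpow_add_le_add_rpow' zero_le_one hy'.le hq0.le hq1
        rwa [Real.one_rpow] at this
      have h2 : (0:ℝ) ≤ y ^ q := Real.rpow_nonneg hy'.le q
      nlinarith [mul_le_mul_of_nonneg_left h1 hp0.le,
        mul_nonneg (mul_nonneg (sub_nonneg.2 hC1) hp0.le) h2]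
  -- Region B : -1 ≤ x ≤ 0
  have hB : MonotoneOn F (Icc (-1) 0) := by
    apply monotoneOn_of_deriv_nonneg (convex_Icc (-1) 0) hcont.continuousOn
    · intro y hy
      rw [interior_Icc] at hy
      exact (hderiv2 y (by linarith [hy.1]) hy.2).differentiableAt.differentiableWithinAt
    · intro y hy
      rw [interior_Icc] at hy
      obtain ⟨hy1, hy2⟩ := hy
      rw [(hderiv2 y (by linarith) hy2).deriv]
      have hs1 : (0:ℝ) < 1 + y := by linarith
      have hs2 : 1 + y ≤ 1 := by linarith
      have h1 : (1 + y) ^ (1:ℝ) ≤ (1 + y) ^ q :=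
        Real.rpow_le_rpow_of_exponent_ge hs1 hs2 hq1
      have h2 : (-y) ^ (1:ℝ) ≤ (-y) ^ q :=
        Real.rpow_le_rpow_of_exponent_ge (by linarith) (by linarith) hq1
      rw [Real.rpow_one] at h1 h2
      have h3 : (0:ℝ) ≤ (-y) ^ q := Real.rpow_nonneg (by linarith) q
      nlinarith [mul_le_mul_of_nonneg_left h1 hp0.le, mul_le_mul_of_nonneg_left h2 hp0.le,
        mul_nonneg (sub_nonneg.2 hC1) (mul_nonneg hp0.le h3)]
  -- Region C : x ≤ -1
  have hCmon : MonotoneOn F (Iic (-1)) := by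
    apply monotoneOn_of_deriv_nonneg (convex_Iic (-1)) hcont.continuousOn
    · intro y hy
      rw [interior_Iic] at hy
      exact (hderiv3 y (by linarith [mem_Iio.1 hy])).differentiableAt.differentiableWithinAt
    · intro y hy
      rw [interior_Iic] at hy
      have hy' : y < -1 := hy
      rw [(hderiv3 y (by linarith)).deriv]
      set t : ℝ := -(1 + y) with hts
      have ht : 0 ≤ t := by rw [hts]; linarith
      have hkey := one_add_rpow_le ht hq0.le hq1
      have hyt : -y = 1 + t := by rw [hts]; ring
      rw [← hC2] at hkey
      rw [hyt]
      nlinarith [mul_le_mul_of_nonneg_left hkey hp0.le]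
  -- combine
  rcases le_or_gt 0 x with hx | hx
  · have := hA (mem_Ici.2 le_rfl) (mem_Ici.2 hx) hx
    rwa [hF0] at this
  rcases le_or_gt (-1) x with hx1 | hx1
  · have := hB (mem_Icc.2 ⟨hx1, hx.le⟩) (mem_Icc.2 ⟨by norm_num, le_rfl⟩) hx.le
    rw [hF0] at this
    linarith
  · have := hCmon (mem_Iic.2 hx1.le) (mem_Iic.2 le_rfl) hx1.le
    linarith

/-- the main inequality for positive `a` -/
private lemma main_pos {a : ℝ} (b : ℝ) {p : ℝ} (hp1 : 1 < p) (hp2 : p ≤ 2) (ha : 0 < a) :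
    |a + b| ^ p ≤ a ^ p + p * a ^ (p - 1) * b + (2 : ℝ) ^ (2 - p) * |b| ^ p := by
  have hp0 : 0 < p := by linarith
  have hkey := key_ineq hp1 hp2 (b / a)
  have hap : (0:ℝ) < a ^ p := Real.rpow_pos_of_pos ha p
  have h1 : |a + b| ^ p = a ^ p * |1 + b / a| ^ p := by
    have e : a + b = a * (1 + b / a) := by field_simp
    rw [e, abs_mul, abs_of_pos ha, Real.mul_rpow ha.le (abs_nonneg _)]
  have h2 : a ^ p * (b / a) = a ^ (p - 1) * b := by
    rw [Real.rpow_sub ha, Real.rpow_one]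
    field_simp
  have h3 : a ^ p * |b / a| ^ p = |b| ^ p := by
    rw [abs_div, abs_of_pos ha, Real.div_rpow (abs_nonneg b) ha.le]
    field_simp
  rw [h1]
  calc a ^ p * |1 + b / a| ^ p
      ≤ a ^ p * (1 + p * (b / a) + 2 ^ (2 - p) * |b / a| ^ p) := by
        exact mul_le_mul_of_nonneg_left hkey hap.le
    _ = a ^ p + p * a ^ (p - 1) * b + (2:ℝ) ^ (2 - p) * |b| ^ p := by
        rw [mul_add, mul_add, mul_one]
        rw [show a ^ p * (p * (b / a)) = p * (a ^ p * (b / a)) by ring, h2]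
        rw [show a ^ p * (2 ^ (2 - p) * |b / a| ^ p) = 2 ^ (2 - p) * (a ^ p * |b / a| ^ p)
          by ring, h3]
        ring

theorem abs_add_rpow_le (a b p : ℝ) (hp1 : 1 < p) (hp2 : p ≤ 2) :
    |a + b| ^ p ≤ |a| ^ p + p * Real.sign a * |a| ^ (p - 1) * b
      + (2 : ℝ) ^ (2 - p) * |b| ^ p := by
  have hp0 : 0 < p := by linarith
  rcases lt_trichotomy a 0 with ha | ha | ha
  · have h := main_pos (-b) hp1 hp2 (neg_pos.2 ha)
    rw [show -a + -b = -(a + b) by ring, abs_neg, abs_neg] at h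
    rw [Real.sign_of_neg ha, abs_of_neg ha]
    calc |a + b| ^ p ≤ (-a) ^ p + p * (-a) ^ (p - 1) * (-b) + (2:ℝ) ^ (2 - p) * |b| ^ p := h
      _ = (-a) ^ p + p * (-1) * (-a) ^ (p - 1) * b + (2:ℝ) ^ (2 - p) * |b| ^ p := by ring
  · subst ha
    rw [Real.sign_zero, abs_zero, Real.zero_rpow hp0.ne', zero_add]
    have hC1 : (1:ℝ) ≤ 2 ^ (2 - p) := Real.one_le_rpow (by norm_num) (by linarith)
    have hb : (0:ℝ) ≤ |b| ^ p := Real.rpow_nonneg (abs_nonneg b) p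
    nlinarith [hC1, hb]
  · have h := main_pos b hp1 hp2 ha
    rw [Real.sign_of_pos ha, abs_of_pos ha]
    calc |a + b| ^ p ≤ a ^ p + p * a ^ (p - 1) * b + (2:ℝ) ^ (2 - p) * |b| ^ p := h
      _ = a ^ p + p * 1 * a ^ (p - 1) * b + (2:ℝ) ^ (2 - p) * |b| ^ p := by ring
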